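/- Let (a_n)_{n≥1} be a sequence of real numbers with a_n > 1 for every n ≥ 1. Then there exists a C^∞ function g : ℝ → ℝ such that for every integer n ≥ 0 the n-th derivative g^{(n)} is a bounded function on ℝ (so that the real number b_n := limsup_{x→+∞} |g^{(n)}(x)| is well defined and finite), and such that b_{n+1} > a_{n+1} · b_n for every n ≥ 0. -/

import Mathlib

open Filter Real

lemma iteratedDeriv_coswave (c l : ℝ) (n : ℕ) :
    iteratedDeriv n (fun x => c * Real.cos (l * x)) =
      fun x => c * l ^ n * Real.cos (l * x + n * (π / 2)) := by
  induction n with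
  | zero => simp
  | succ n ih =>
    rw [iteratedDeriv_succ, ih]
    ext x
    have h : HasDerivAt (fun x : ℝ => c * l ^ n * Real.cos (l * x + n * (π / 2)))
        (c * l ^ n * (-Real.sin (l * x + n * (π / 2)) * l)) x := by
      have h1 : HasDerivAt (fun x : ℝ => l * x + n * (π / 2)) l x := by
        simpa using ((hasDerivAt_id x).const_mul l).add_const ((n : ℝ) * (π / 2))
      exact (h1.cos).const_mul _
    rw [h.deriv]
    have : ((n : ℝ) + 1) * (π / 2) = (l * x + n * (π / 2)) + π / 2 - l * x := by ring
    push_cast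
    rw [this, show l * x + ((l * x + ↑n * (π / 2)) + π / 2 - l * x) = (l * x + ↑n * (π/2)) + π/2 by ring, Real.cos_add_pi_div_two]
    ring

noncomputable def BLaux (a : ℕ → ℝ) : ℕ → ℝ × ℕ
  | 0 => (1, 8)
  | n + 1 =>
    let p := BLaux a n
    let B := max (2 * a (n + 1)) (16 * p.2) * p.1
    (B, max p.2 ⌈8 * 2 ^ (n + 1) * B⌉₊)

noncomputable def Bf (a : ℕ → ℝ) (n : ℕ) : ℝ := (BLaux a n).1
noncomputable def Lf (a : ℕ → ℝ) (n : ℕ) : ℕ := (BLaux a n).2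

lemma Lf_mono (a : ℕ → ℝ) : Monotone (Lf a) := by
  apply monotone_nat_of_le_succ
  intro n
  show (BLaux a n).2 ≤ _
  simp [Lf, BLaux]

lemma eight_le_Lf (a : ℕ → ℝ) (n : ℕ) : 8 ≤ Lf a n := by
  have : Lf a 0 = 8 := rfl
  calc 8 = Lf a 0 := this.symm
    _ ≤ Lf a n := Lf_mono a (Nat.zero_le n)

lemma one_le_Bf (a : ℕ → ℝ) (n : ℕ) : 1 ≤ Bf a n := by
  induction n with
  | zero => simp [Bf, BLaux]
  | succ n ih =>
    show (1:ℝ) ≤ max (2 * a (n + 1)) (16 * (BLaux a n).2) * (BLaux a n).1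
    have h8 : (8:ℝ) ≤ ((BLaux a n).2 : ℝ) := by exact_mod_cast eight_le_Lf a n
    have h16 : (16:ℝ) * (BLaux a n).2 ≤ max (2 * a (n + 1)) (16 * (BLaux a n).2) :=
      le_max_right _ _
    have hB : (1:ℝ) ≤ (BLaux a n).1 := ih
    nlinarith

lemma Bf_pos (a : ℕ → ℝ) (n : ℕ) : 0 < Bf a n := lt_of_lt_of_le one_pos (one_le_Bf a n)

lemma Lf_ge (a : ℕ → ℝ) (n : ℕ) : 8 * 2 ^ n * Bf a n ≤ (Lf a n : ℝ) := by
  cases n with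
  | zero => simp [Bf, Lf, BLaux]
  | succ n =>
    have h1 : (⌈8 * 2 ^ (n+1) * Bf a (n+1)⌉₊ : ℝ) ≤ (Lf a (n+1) : ℝ) := by
      have : (⌈8 * 2 ^ (n+1) * Bf a (n+1)⌉₊ : ℕ) ≤ Lf a (n+1) := le_max_right _ _
      exact_mod_cast this
    exact (Nat.le_ceil _).trans h1

lemma Bf_succ_ge_a (a : ℕ → ℝ) (n : ℕ) : 2 * a (n + 1) * Bf a n ≤ Bf a (n + 1) := by
  have := mul_le_mul_of_nonneg_right (le_max_left (2 * a (n + 1)) (16 * ((BLaux a n).2:ℝ)))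
    (le_of_lt (Bf_pos a n))
  exact this

lemma Bf_succ_ge_L (a : ℕ → ℝ) (n : ℕ) : 16 * (Lf a n : ℝ) * Bf a n ≤ Bf a (n + 1) := by
  have := mul_le_mul_of_nonneg_right (le_max_right (2 * a (n + 1)) (16 * ((BLaux a n).2:ℝ)))
    (le_of_lt (Bf_pos a n))
  exact this

noncomputable def cf (a : ℕ → ℝ) (k : ℕ) : ℝ := Bf a k / (Lf a k : ℝ) ^ k
noncomputable def tf (a : ℕ → ℝ) (k n : ℕ) : ℝ := cf a k * (Lf a k : ℝ) ^ n

lemma Lf_pos (a : ℕ → ℝ) (k : ℕ) : (0:ℝ) < (Lf a k : ℝ) := by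
  have := eight_le_Lf a k; positivity

lemma one_le_Lf (a : ℕ → ℝ) (k : ℕ) : (1:ℝ) ≤ (Lf a k : ℝ) := by
  have := eight_le_Lf a k; exact_mod_cast le_trans (by norm_num) this

lemma tf_pos (a : ℕ → ℝ) (k n : ℕ) : 0 < tf a k n := by
  have h1 := Bf_pos a k
  have h2 := Lf_pos a k
  unfold tf cf
  positivity

lemma tf_self (a : ℕ → ℝ) (n : ℕ) : tf a n n = Bf a n := by
  unfold tf cf
  have := Lf_pos a n
  field_simp

lemma tf_succ (a : ℕ → ℝ) (k n : ℕ) : tf a k (n + 1) = (Lf a k : ℝ) * tf a k n := by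
  unfold tf; rw [pow_succ]; ring

lemma tf_mono (a : ℕ → ℝ) (k : ℕ) {n m : ℕ} (h : n ≤ m) : tf a k n ≤ tf a k m := by
  unfold tf
  have h1 := Bf_pos a k
  have h2 := Lf_pos a k
  have : (Lf a k : ℝ) ^ n ≤ (Lf a k : ℝ) ^ m := pow_le_pow_right₀ (one_le_Lf a k) h
  have hc : 0 < cf a k := by unfold cf; positivity
  nlinarith

lemma tf_tail (a : ℕ → ℝ) {k n : ℕ} (h : n < k) : tf a k n ≤ (1/2) ^ k * (1/8) := by
  obtain ⟨m, rfl⟩ := Nat.exists_eq_add_of_lt h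
  set K := n + m + 1 with hK
  have h1 : tf a K n ≤ tf a K (K - 1) := tf_mono a K (by omega)
  have h2 : tf a K (K - 1) = Bf a K / (Lf a K : ℝ) := by
    unfold tf cf
    have : K - 1 + 1 = K := by omega
    have hL := Lf_pos a K
    have hpow : (Lf a K : ℝ) ^ K = (Lf a K : ℝ) ^ (K - 1) * Lf a K := by rw [← pow_succ, this]
    rw [hpow, mul_comm ((Lf a K : ℝ) ^ (K - 1)), ← div_div, div_mul_cancel₀ _ (pow_ne_zero _ hL.ne')]
  have hL := Lf_ge a K
  have hLpos := Lf_pos a K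
  have hB := Bf_pos a K
  have h3 : Bf a K / (Lf a K : ℝ) ≤ Bf a K / (8 * 2 ^ K * Bf a K) := by
    apply div_le_div_of_nonneg_left hB.le _ hL
    positivity
  have h4 : Bf a K / (8 * 2 ^ K * Bf a K) = (1/2) ^ K * (1/8) := by
    rw [div_pow]
    field_simp
    ring
  linarith

lemma tf_sum_lt (a : ℕ → ℝ) (n : ℕ) :
    ∑ k ∈ Finset.range n, tf a k n ≤ Bf a n / 8 := by
  induction n with
  | zero => simp; linarith [Bf_pos a 0]
  | succ n ih =>
    rw [Finset.sum_range_succ]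
    have step : ∀ k ∈ Finset.range n, tf a k (n+1) ≤ (Lf a n : ℝ) * tf a k n := by
      intro k hk
      rw [tf_succ]
      have hk' : k ≤ n := le_of_lt (Finset.mem_range.mp hk)
      have : (Lf a k : ℝ) ≤ (Lf a n : ℝ) := by exact_mod_cast Lf_mono a hk'
      nlinarith [tf_pos a k n]
    have h1 : ∑ k ∈ Finset.range n, tf a k (n+1) ≤ (Lf a n : ℝ) * ∑ k ∈ Finset.range n, tf a k n := by
      rw [Finset.mul_sum]
      exact Finset.sum_le_sum step
    have h2 : tf a n (n+1) = (Lf a n : ℝ) * Bf a n := by rw [tf_succ, tf_self]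
    have h3 : (Lf a n : ℝ) * ∑ k ∈ Finset.range n, tf a k n ≤ (Lf a n : ℝ) * (Bf a n / 8) := by
      have := Lf_pos a n
      nlinarith
    have h4 := Bf_succ_ge_L a n
    have h5 := Lf_pos a n
    have h6 := Bf_pos a n
    nlinarith

lemma tf_summable (a : ℕ → ℝ) (n : ℕ) : Summable (fun k => tf a k n) := by
  rw [← summable_nat_add_iff (n + 1)]
  have hgeom : Summable (fun k => (1/2:ℝ) ^ k) :=
    summable_geometric_of_lt_one (by norm_num) (by norm_num)
  refine Summable.of_nonneg_of_le (fun k => (tf_pos a _ n).le) (fun k => ?_) hgeom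
  have h := tf_tail a (k := k + (n+1)) (n := n) (by omega)
  have h2 : ((1:ℝ)/2) ^ (k + (n+1)) * (1/8) ≤ (1/2) ^ k := by
    rw [pow_add]
    have h1 : ((1:ℝ)/2) ^ (n+1) ≤ 1 := pow_le_one₀ (by norm_num) (by norm_num)
    have h3 : (0:ℝ) ≤ (1/2:ℝ) ^ k := by positivity
    nlinarith
  linarith
noncomputable def gf (a : ℕ → ℝ) : ℝ → ℝ :=
  fun x => ∑' k, cf a k * Real.cos ((Lf a k : ℝ) * x)

noncomputable def Df (a : ℕ → ℝ) (n : ℕ) : ℝ → ℝ :=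
  fun x => ∑' k, cf a k * (Lf a k : ℝ) ^ n * Real.cos ((Lf a k : ℝ) * x + n * (π / 2))

lemma cf_pos (a : ℕ → ℝ) (k : ℕ) : 0 < cf a k := by
  have := Bf_pos a k; have := Lf_pos a k; unfold cf; positivity

lemma habs (a : ℕ → ℝ) (k n : ℕ) (θ : ℝ) :
    |cf a k * (Lf a k : ℝ) ^ n * Real.cos θ| ≤ tf a k n := by
  have h1 := cf_pos a k
  have h2 := Lf_pos a k
  have h3 : |Real.cos θ| ≤ 1 := Real.abs_cos_le_one θ
  rw [abs_mul, abs_mul, abs_of_pos h1, abs_of_pos (pow_pos h2 n)]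
  unfold tf
  nlinarith [abs_nonneg (Real.cos θ), mul_pos h1 (pow_pos h2 n)]

lemma coswave_hasDerivAt (c l : ℝ) (n : ℕ) (x : ℝ) :
    HasDerivAt (fun x => c * l ^ n * Real.cos (l * x + n * (π / 2)))
      (c * l ^ (n + 1) * Real.cos (l * x + (n + 1) * (π / 2))) x := by
  have h1 : HasDerivAt (fun x : ℝ => l * x + n * (π / 2)) l x := by
    simpa using ((hasDerivAt_id x).const_mul l).add_const ((n : ℝ) * (π / 2))
  have h2 := (h1.cos).const_mul (c * l ^ n)
  refine h2.congr_deriv ?_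
  have : ((n : ℝ) + 1) * (π / 2) = (l * x + n * (π / 2)) + π / 2 - l * x := by ring
  push_cast
  rw [this, show l * x + ((l * x + (n:ℝ) * (π / 2)) + π / 2 - l * x)
      = (l * x + (n:ℝ) * (π / 2)) + π / 2 by ring, Real.cos_add_pi_div_two]
  ring

lemma Df_summand_summable (a : ℕ → ℝ) (n : ℕ) (x : ℝ) :
    Summable fun k => cf a k * (Lf a k : ℝ) ^ n * Real.cos ((Lf a k : ℝ) * x + n * (π / 2)) :=
  Summable.of_norm_bounded (tf_summable a n) (fun k => habs a k n _)

lemma contDiff_fk (a : ℕ → ℝ) (k : ℕ) :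
    ContDiff ℝ (⊤ : ℕ∞) (fun x : ℝ => cf a k * Real.cos ((Lf a k : ℝ) * x)) :=
  contDiff_const.mul (Real.contDiff_cos.comp ((contDiff_const).mul contDiff_id))

lemma fk_iteratedFDeriv_bound (a : ℕ → ℝ) (i k : ℕ) (x : ℝ) :
    ‖iteratedFDeriv ℝ i (fun x : ℝ => cf a k * Real.cos ((Lf a k : ℝ) * x)) x‖ ≤ tf a k i := by
  rw [norm_iteratedFDeriv_eq_norm_iteratedDeriv, iteratedDeriv_coswave, Real.norm_eq_abs]
  exact habs a k i _

lemma gf_contDiff (a : ℕ → ℝ) : ContDiff ℝ (⊤ : ℕ∞) (gf a) := by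
  exact contDiff_tsum (fun k => contDiff_fk a k) (fun i _ => tf_summable a i)
    (fun i k x _ => fk_iteratedFDeriv_bound a i k x)

lemma gf_iteratedDeriv (a : ℕ → ℝ) (n : ℕ) : iteratedDeriv n (gf a) = Df a n := by
  induction n with
  | zero =>
    rw [iteratedDeriv_zero]
    funext x
    unfold gf Df
    apply tsum_congr
    intro k
    simp
  | succ n ih =>
    rw [iteratedDeriv_succ, ih]
    funext x
    unfold Df
    have hD := deriv_tsum (u := fun k => tf a k (n + 1))
      (g := fun k x => cf a k * (Lf a k : ℝ) ^ n * Real.cos ((Lf a k : ℝ) * x + n * (π / 2)))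
      (y₀ := 0) (tf_summable a (n + 1))
      (fun k y => (coswave_hasDerivAt (cf a k) _ n y).differentiableAt)
      (fun k y => by
        rw [(coswave_hasDerivAt (cf a k) _ n y).deriv, Real.norm_eq_abs]
        exact habs a k (n + 1) _)
      (Df_summand_summable a n 0)
    rw [hD]
    apply tsum_congr
    intro k
    rw [(coswave_hasDerivAt (cf a k) _ n x).deriv]
    push_cast
    ring_nf
lemma rest_bound (a : ℕ → ℝ) (n : ℕ) (x : ℝ) :
    |∑' k, (if k = n then 0 else
      cf a k * (Lf a k : ℝ) ^ n * Real.cos ((Lf a k : ℝ) * x + n * (π / 2)))| ≤ Bf a n / 4 := by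
  set w : ℕ → ℝ := fun k => if k = n then 0 else tf a k n with hw
  have hw_nonneg : ∀ k, 0 ≤ w k := by
    intro k; by_cases h : k = n <;> simp [w, h, (tf_pos a k n).le]
  have hw_le : ∀ k, w k ≤ tf a k n := by
    intro k
    by_cases h : k = n
    · simp only [w, h, if_pos rfl]; exact (tf_pos a n n).le
    · simp [w, h]
  have hwsum : Summable w := Summable.of_nonneg_of_le hw_nonneg hw_le (tf_summable a n)
  have hbd : ∀ k, ‖if k = n then 0 else
      cf a k * (Lf a k : ℝ) ^ n * Real.cos ((Lf a k : ℝ) * x + n * (π / 2))‖ ≤ w k := by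
    intro k
    by_cases h : k = n
    · simp [w, h]
    · simp only [w, h, if_false, Real.norm_eq_abs]
      exact habs a k n _
  have h1 := tsum_of_norm_bounded hwsum.hasSum hbd
  rw [Real.norm_eq_abs] at h1
  have hsplit := (hwsum.sum_add_tsum_nat_add (n + 1)).symm
  have hA : ∑ k ∈ Finset.range (n + 1), w k ≤ Bf a n / 8 := by
    rw [Finset.sum_range_succ]
    have hn : w n = 0 := by simp [w]
    have : ∑ k ∈ Finset.range n, w k = ∑ k ∈ Finset.range n, tf a k n := by
      apply Finset.sum_congr rfl
      intro k hk
      have : k ≠ n := Nat.ne_of_lt (Finset.mem_range.mp hk)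
      simp [w, this]
    rw [hn, this, add_zero]
    exact tf_sum_lt a n
  have hB : ∑' k : ℕ, w (k + (n + 1)) ≤ Bf a n / 8 := by
    have hterm : ∀ k : ℕ, w (k + (n + 1)) ≤ (1/2:ℝ) ^ k * ((1/2) ^ (n+1) * (1/8)) := by
      intro k
      have h2 : w (k + (n + 1)) = tf a (k + (n+1)) n := by
        have : k + (n + 1) ≠ n := by omega
        simp [w, this]
      rw [h2]
      have := tf_tail a (k := k + (n+1)) (n := n) (by omega)
      calc tf a (k + (n+1)) n ≤ (1/2:ℝ) ^ (k + (n+1)) * (1/8) := this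
        _ = (1/2:ℝ) ^ k * ((1/2) ^ (n+1) * (1/8)) := by rw [pow_add]; ring
    have hgeom : Summable (fun k => (1/2:ℝ) ^ k * ((1/2) ^ (n+1) * (1/8))) :=
      (summable_geometric_of_lt_one (by norm_num) (by norm_num)).mul_right _
    have h3 : ∑' k : ℕ, w (k + (n + 1)) ≤ ∑' k : ℕ, (1/2:ℝ) ^ k * ((1/2) ^ (n+1) * (1/8)) :=
      Summable.tsum_le_tsum hterm ((summable_nat_add_iff (n+1)).2 hwsum) hgeom
    have h4 : ∑' k : ℕ, (1/2:ℝ) ^ k * ((1/2) ^ (n+1) * (1/8))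
        = (1/2:ℝ) ^ (n+1) * (1/8) * 2 := by
      rw [tsum_mul_right, tsum_geometric_of_lt_one (by norm_num) (by norm_num)]
      norm_num; ring
    have h5 : ((1:ℝ)/2) ^ (n+1) ≤ 1/2 := by
      have := pow_le_pow_of_le_one (show (0:ℝ) ≤ 1/2 by norm_num)
        (show (1/2:ℝ) ≤ 1 by norm_num) (show 1 ≤ n + 1 by omega)
      simpa using this
    have h6 := one_le_Bf a n
    calc ∑' k : ℕ, w (k + (n + 1)) ≤ (1/2:ℝ) ^ (n+1) * (1/8) * 2 := by rw [← h4]; exact h3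
      _ ≤ 1/8 := by nlinarith
      _ ≤ Bf a n / 8 := by linarith
  calc |∑' k, (if k = n then 0 else
      cf a k * (Lf a k : ℝ) ^ n * Real.cos ((Lf a k : ℝ) * x + n * (π / 2)))|
      ≤ ∑' k, w k := h1
    _ = ∑ k ∈ Finset.range (n + 1), w k + ∑' k : ℕ, w (k + (n + 1)) := hsplit
    _ ≤ Bf a n / 8 + Bf a n / 8 := add_le_add hA hB
    _ = Bf a n / 4 := by ring

lemma Df_le (a : ℕ → ℝ) (n : ℕ) (x : ℝ) : |Df a n x| ≤ Bf a n + Bf a n / 4 := by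
  unfold Df
  rw [(Df_summand_summable a n x).tsum_eq_add_tsum_ite n]
  calc |cf a n * (Lf a n : ℝ) ^ n * Real.cos ((Lf a n : ℝ) * x + n * (π / 2)) +
        ∑' k, (if k = n then 0 else
          cf a k * (Lf a k : ℝ) ^ n * Real.cos ((Lf a k : ℝ) * x + n * (π / 2)))|
      ≤ |cf a n * (Lf a n : ℝ) ^ n * Real.cos ((Lf a n : ℝ) * x + n * (π / 2))| +
        |∑' k, (if k = n then 0 else
          cf a k * (Lf a k : ℝ) ^ n * Real.cos ((Lf a k : ℝ) * x + n * (π / 2)))| := abs_add_le _ _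
    _ ≤ tf a n n + Bf a n / 4 := add_le_add (habs a n n _) (rest_bound a n x)
    _ = Bf a n + Bf a n / 4 := by rw [tf_self]

lemma Df_periodic (a : ℕ → ℝ) (n : ℕ) (x : ℝ) (j : ℕ) :
    Df a n (x + j * (2 * π)) = Df a n x := by
  unfold Df
  apply tsum_congr
  intro k
  congr 1
  have harg : (Lf a k : ℝ) * (x + j * (2 * π)) + n * (π / 2)
      = ((Lf a k : ℝ) * x + n * (π / 2)) + ((Lf a k * j : ℕ) : ℝ) * (2 * π) := by
    push_cast; ring
  rw [harg, Real.cos_add_nat_mul_two_pi]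

lemma Df_lower (a : ℕ → ℝ) (n : ℕ) :
    Bf a n - Bf a n / 4 ≤ |Df a n (-(n * (π / 2)) / (Lf a n))| := by
  set x₀ : ℝ := -(n * (π / 2)) / (Lf a n) with hx₀
  have hL := Lf_pos a n
  have harg : (Lf a n : ℝ) * x₀ + n * (π / 2) = 0 := by
    rw [hx₀]; field_simp; ring
  have hterm : cf a n * (Lf a n : ℝ) ^ n * Real.cos ((Lf a n : ℝ) * x₀ + n * (π / 2))
      = Bf a n := by
    rw [harg, Real.cos_zero, mul_one, ← tf_self a n]; rfl
  unfold Df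
  rw [(Df_summand_summable a n x₀).tsum_eq_add_tsum_ite n, hterm]
  have hrb := rest_bound a n x₀
  set R := ∑' k, (if k = n then 0 else
    cf a k * (Lf a k : ℝ) ^ n * Real.cos ((Lf a k : ℝ) * x₀ + n * (π / 2)))
  have := abs_abs_sub_abs_le_abs_sub (Bf a n + R) R
  have h2 : |Bf a n + R| ≥ |Bf a n| - |R| := by
    have := abs_sub_abs_le_abs_sub (Bf a n) (-R)
    simp only [abs_neg, sub_neg_eq_add] at this
    linarith
  rw [abs_of_pos (Bf a n |> fun _ => Bf_pos a n)] at h2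
  cases abs_cases R with
  | inl h => linarith [h2]
  | inr h => linarith [h2]
/-- Given any sequence of real numbers `a_n > 1` (`n ≥ 1`), there is a `C^∞` function
`g : ℝ → ℝ` all of whose derivatives are bounded, such that the (finite) numbers
`b_n = limsup_{x → +∞} |g^{(n)}(x)|` satisfy `b_{n+1} > a_{n+1} · b_n` for every `n ≥ 0`. -/
theorem exists_smooth_function_with_growing_derivative_limsups
    (a : ℕ → ℝ) (ha : ∀ n : ℕ, 1 ≤ n → 1 < a n) :
    ∃ g : ℝ → ℝ, ContDiff ℝ (⊤ : ℕ∞) g ∧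
      (∀ n : ℕ, ∃ C : ℝ, ∀ x : ℝ, |iteratedDeriv n g x| ≤ C) ∧
      (∀ n : ℕ,
        a (n + 1) * limsup (fun x : ℝ => |iteratedDeriv n g x|) atTop
          < limsup (fun x : ℝ => |iteratedDeriv (n + 1) g x|) atTop) := by
  refine ⟨gf a, gf_contDiff a, ?_, ?_⟩
  · intro n
    exact ⟨Bf a n + Bf a n / 4, fun x => by rw [gf_iteratedDeriv]; exact Df_le a n x⟩
  · intro n
    have hbdd : ∀ m : ℕ, IsBoundedUnder (· ≤ ·) atTop (fun x : ℝ => |iteratedDeriv m (gf a) x|) :=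
      fun m => isBoundedUnder_of ⟨Bf a m + Bf a m / 4,
        fun x => by rw [gf_iteratedDeriv]; exact Df_le a m x⟩
    have hub : limsup (fun x : ℝ => |iteratedDeriv n (gf a) x|) atTop
        ≤ Bf a n + Bf a n / 4 := by
      apply limsup_le_of_le (isCoboundedUnder_le_of_le atTop (fun x => abs_nonneg _))
      exact Eventually.of_forall (fun x => by rw [gf_iteratedDeriv]; exact Df_le a n x)
    have hlb : ∀ m : ℕ, Bf a m - Bf a m / 4
        ≤ limsup (fun x : ℝ => |iteratedDeriv m (gf a) x|) atTop := by
      intro m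
      apply le_limsup_of_frequently_le _ (hbdd m)
      rw [frequently_atTop]
      intro b
      set x₀ : ℝ := -(m * (π / 2)) / (Lf a m) with hx₀
      have hπ : (0:ℝ) < 2 * π := by positivity
      set j : ℕ := ⌈(b - x₀) / (2 * π)⌉₊ with hj
      refine ⟨x₀ + (j : ℝ) * (2 * π), ?_, ?_⟩
      · have h1 : (b - x₀) / (2 * π) ≤ (j : ℝ) := Nat.le_ceil _
        have h2 : b - x₀ ≤ (j : ℝ) * (2 * π) := by
          rw [div_le_iff₀ hπ] at h1; linarith
        linarith
      · rw [gf_iteratedDeriv, Df_periodic]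
        exact Df_lower a m
    have haPos : 1 < a (n + 1) := ha (n + 1) (by omega)
    have hBa := Bf_succ_ge_a a n
    have hBpos := Bf_pos a n
    have hBpos1 := Bf_pos a (n + 1)
    have h0 : (0:ℝ) ≤ a (n + 1) := by linarith
    calc a (n + 1) * limsup (fun x : ℝ => |iteratedDeriv n (gf a) x|) atTop
        ≤ a (n + 1) * (Bf a n + Bf a n / 4) := mul_le_mul_of_nonneg_left hub h0
      _ < Bf a (n + 1) - Bf a (n + 1) / 4 := by nlinarith [mul_pos (lt_trans one_pos haPos) hBpos]
      _ ≤ limsup (fun x : ℝ => |iteratedDeriv (n + 1) (gf a) x|) atTop := hlb (n + 1)
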